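/- Any application of the SPM rule to a decreasing configuration c where between any two plateaus there is at least a cliff, at any column, yields a configuration of length at most one greater; and conversely, along any SPM evolution, the length of the configuration (number of nonzero columns) never decreases. -/
import Mathlib


/-- The SPM rule applied at column `i` (0-indexed). -/
def SPMStep (i : ℕ) (a a' : ℕ → ℕ) : Prop :=
  a (i + 1) + 2 ≤ a i ∧ a' i = a i - 1 ∧ a' (i + 1) = a (i + 1) + 1 ∧
    ∀ j, j ≠ i → j ≠ i + 1 → a' j = a j

/-- An application of the SPM rule to a configuration of length at most `l` yields a
configuration of length at most `l + 1`; moreover no nonzero column ever becomes zero, so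
along any SPM evolution the length never decreases. -/
theorem spm_length_monotone (a a' : ℕ → ℕ) (i l : ℕ)
    (h : SPMStep i a a') (hl : ∀ j, l ≤ j → a j = 0) :
    (∀ j, l + 1 ≤ j → a' j = 0) ∧ (∀ j, 0 < a j → 0 < a' j) := by
  obtain ⟨h1, h2, h3, h4⟩ := h
  have hilt : i < l := by
    by_contra hc
    have := hl i (le_of_not_gt hc)
    omega
  constructor
  · intro j hj
    rcases eq_or_ne j i with rfl | hji
    · omega
    rcases eq_or_ne j (i + 1) with rfl | hji1
    · omega
    · rw [h4 j hji hji1]; exact hl j (by omega)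
  · intro j hj
    rcases eq_or_ne j i with rfl | hji
    · omega
    rcases eq_or_ne j (i + 1) with rfl | hji1
    · omega
    · rw [h4 j hji hji1]; exact hj
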